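/- Let n ≥ 1, let A₁, A₂ be symmetric positive semidefinite real n×n matrices, let τ > 0 and σ ≥ 1/2. Then the matrices I + στA₁ and I + στA₂ are invertible and the transition matrix T = I − τ (I + στA₁)⁻¹ (A₁ + A₂) (I + στA₂)⁻¹ satisfies ‖T‖ ≤ 1, where ‖·‖ is the operator norm induced by the Euclidean norm on ℝⁿ. -/

import Mathlib

open Matrix RealInnerProductSpace

/-- Scalar multiple of a PSD real matrix by a nonnegative scalar is PSD. -/
lemma aux_smul_posSemidef {n : ℕ} {A : Matrix (Fin n) (Fin n) ℝ} (hA : A.PosSemidef)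
    {a : ℝ} (ha : 0 ≤ a) : (a • A).PosSemidef := by
  rw [posSemidef_iff_dotProduct_mulVec] at hA ⊢
  refine ⟨?_, fun x => ?_⟩
  · unfold Matrix.IsHermitian
    rw [conjTranspose_smul, hA.1.eq]
    simp
  · rw [smul_mulVec, dotProduct_smul]
    exact smul_nonneg ha (hA.2 x)

/-- `1 + a • A` is positive definite when `A` is PSD and `a ≥ 0`. -/
lemma aux_one_add_posDef {n : ℕ} {A : Matrix (Fin n) (Fin n) ℝ} (hA : A.PosSemidef)
    {a : ℝ} (ha : 0 ≤ a) : (1 + a • A).PosDef :=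
  Matrix.PosDef.add_posSemidef Matrix.PosDef.one (aux_smul_posSemidef hA ha)

/-- The inner product `⟪x, A x⟫` is nonnegative for PSD `A`. -/
lemma aux_inner_nonneg {n : ℕ} {A : Matrix (Fin n) (Fin n) ℝ} (hA : A.PosSemidef)
    (x : EuclideanSpace ℝ (Fin n)) :
    0 ≤ (inner ℝ x (Matrix.toEuclideanCLM (𝕜 := ℝ) A x) : ℝ) := by
  rw [EuclideanSpace.inner_eq_star_dotProduct]
  have h := (posSemidef_iff_dotProduct_mulVec.mp hA).2 (WithLp.equiv 2 _ x)
  simpa [Matrix.ofLp_toEuclideanCLM, Matrix.toLin'_apply, dotProduct_comm] using h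

/-- Key pointwise estimate: `‖(1 - a•A) y‖ ≤ ‖(1 + a•A) y‖` for PSD `A`, `a ≥ 0`. -/
lemma aux_cayley_pointwise {n : ℕ} {A : Matrix (Fin n) (Fin n) ℝ} (hA : A.PosSemidef)
    {a : ℝ} (ha : 0 ≤ a) (y : EuclideanSpace ℝ (Fin n)) :
    ‖Matrix.toEuclideanCLM (𝕜 := ℝ) (1 - a • A) y‖ ≤
      ‖Matrix.toEuclideanCLM (𝕜 := ℝ) (1 + a • A) y‖ := by
  set φ := Matrix.toEuclideanCLM (𝕜 := ℝ) (n := Fin n)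
  have h1 : φ (1 - a • A) y = y - a • (φ A y) := by
    simp [φ, map_sub, _root_.map_smul]
  have h2 : φ (1 + a • A) y = y + a • (φ A y) := by
    simp [φ, map_add, _root_.map_smul]
  rw [h1, h2]
  have hin : (0:ℝ) ≤ inner ℝ y (a • (φ A y)) := by
    rw [real_inner_smul_right]
    exact mul_nonneg ha (aux_inner_nonneg hA y)
  have hs : ‖y - a • (φ A y)‖ ^ 2 ≤ ‖y + a • (φ A y)‖ ^ 2 := by
    rw [norm_sub_sq_real, norm_add_sq_real]
    linarith
  have h3 := norm_nonneg (y - a • (φ A y))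
  have h4 := norm_nonneg (y + a • (φ A y))
  nlinarith

/-- The Cayley-type transform `(1 + a•A)⁻¹ (1 - a•A)` is a contraction. -/
lemma aux_cayley_norm_le {n : ℕ} {A : Matrix (Fin n) (Fin n) ℝ} (hA : A.PosSemidef)
    {a : ℝ} (ha : 0 ≤ a) :
    ‖Matrix.toEuclideanCLM (𝕜 := ℝ) (n := Fin n) ((1 + a • A)⁻¹ * (1 - a • A))‖ ≤ 1 := by
  set φ := Matrix.toEuclideanCLM (𝕜 := ℝ) (n := Fin n)
  set B : Matrix (Fin n) (Fin n) ℝ := 1 + a • A with hBdef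
  set C : Matrix (Fin n) (Fin n) ℝ := 1 - a • A with hCdef
  have hBu : IsUnit B := (aux_one_add_posDef hA ha).isUnit
  have hBd : IsUnit B.det := (Matrix.isUnit_iff_isUnit_det B).mp hBu
  have hcomm : C * B = B * C := by
    rw [hBdef, hCdef]
    simp only [sub_mul, mul_sub, mul_add, add_mul, Matrix.smul_mul, Matrix.mul_smul,
      Matrix.one_mul, Matrix.mul_one, one_mul, mul_one]
    abel
  have hswap : B⁻¹ * C = C * B⁻¹ := by
    calc B⁻¹ * C = B⁻¹ * C * (B * B⁻¹) := by rw [Matrix.mul_nonsing_inv _ hBd, mul_one]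
    _ = B⁻¹ * (C * B) * B⁻¹ := by rw [mul_assoc, mul_assoc, mul_assoc]
    _ = B⁻¹ * (B * C) * B⁻¹ := by rw [hcomm]
    _ = C * B⁻¹ := by rw [← mul_assoc, Matrix.nonsing_inv_mul _ hBd, one_mul]
  refine ContinuousLinearMap.opNorm_le_bound _ zero_le_one (fun x => ?_)
  rw [one_mul, hswap, _root_.map_mul]
  have hx : φ B (φ B⁻¹ x) = x := by
    rw [← ContinuousLinearMap.mul_apply, ← _root_.map_mul, Matrix.mul_nonsing_inv _ hBd]
    simp [φ]
  calc ‖(φ C * φ B⁻¹) x‖ = ‖φ C (φ B⁻¹ x)‖ := rfl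
  _ ≤ ‖φ B (φ B⁻¹ x)‖ := aux_cayley_pointwise hA ha _
  _ = ‖x‖ := by rw [hx]

set_option maxHeartbeats 1000000 in
set_option synthInstance.maxHeartbeats 200000 in
theorem transition_matrix_contraction
    {n : ℕ} (hn : 1 ≤ n)
    (A₁ A₂ : Matrix (Fin n) (Fin n) ℝ)
    (hA₁ : A₁.PosSemidef) (hA₂ : A₂.PosSemidef)
    (τ σ : ℝ) (hτ : 0 < τ) (hσ : 1 / 2 ≤ σ) :
    IsUnit (1 + (σ * τ) • A₁) ∧ IsUnit (1 + (σ * τ) • A₂) ∧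
      ‖Matrix.toEuclideanCLM (𝕜 := ℝ) (n := Fin n)
          (1 - τ • ((1 + (σ * τ) • A₁)⁻¹ * (A₁ + A₂) * (1 + (σ * τ) • A₂)⁻¹))‖ ≤ 1 := by
  have hσ0 : 0 < σ := lt_of_lt_of_le (by norm_num) hσ
  set a : ℝ := σ * τ with hadef
  have ha : 0 < a := mul_pos hσ0 hτ
  set B₁ : Matrix (Fin n) (Fin n) ℝ := 1 + a • A₁ with hB₁def
  set B₂ : Matrix (Fin n) (Fin n) ℝ := 1 + a • A₂ with hB₂def
  have hB₁u : IsUnit B₁ := (aux_one_add_posDef hA₁ ha.le).isUnit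
  have hB₂u : IsUnit B₂ := (aux_one_add_posDef hA₂ ha.le).isUnit
  have hB₁d : IsUnit B₁.det := (Matrix.isUnit_iff_isUnit_det B₁).mp hB₁u
  have hB₂d : IsUnit B₂.det := (Matrix.isUnit_iff_isUnit_det B₂).mp hB₂u
  refine ⟨hB₁u, hB₂u, ?_⟩
  set θ : ℝ := 1 / (2 * σ) with hθdef
  have hθpos : 0 < θ := by positivity
  have hθle : θ ≤ 1 := by
    rw [hθdef, div_le_one (by positivity)]
    linarith
  set K₁ : Matrix (Fin n) (Fin n) ℝ := B₁⁻¹ * (1 - a • A₁) with hK₁def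
  set K₂ : Matrix (Fin n) (Fin n) ℝ := (1 - a • A₂) * B₂⁻¹ with hK₂def
  -- matrix identity: (1 - a•A₁)(1 - a•A₂) = B₁ B₂ - (2a) • (A₁ + A₂)
  have hfact : (1 - a • A₁) * (1 - a • A₂) = B₁ * B₂ - (2 * a) • (A₁ + A₂) := by
    rw [hB₁def, hB₂def]
    rw [sub_mul, mul_sub, mul_sub, add_mul, mul_add, mul_add]
    simp only [Matrix.smul_mul, Matrix.mul_smul, one_mul, mul_one, smul_smul, smul_add]
    module
  have hK : K₁ * K₂ = 1 - (2 * a) • (B₁⁻¹ * (A₁ + A₂) * B₂⁻¹) := by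
    rw [hK₁def, hK₂def]
    calc B₁⁻¹ * (1 - a • A₁) * ((1 - a • A₂) * B₂⁻¹)
        = B₁⁻¹ * ((1 - a • A₁) * (1 - a • A₂)) * B₂⁻¹ := by
          rw [mul_assoc, mul_assoc, mul_assoc]
    _ = B₁⁻¹ * (B₁ * B₂ - (2 * a) • (A₁ + A₂)) * B₂⁻¹ := by rw [hfact]
    _ = B₁⁻¹ * (B₁ * B₂) * B₂⁻¹ - (2 * a) • (B₁⁻¹ * (A₁ + A₂) * B₂⁻¹) := by
          rw [mul_sub, sub_mul, Matrix.mul_smul, Matrix.smul_mul]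
    _ = 1 - (2 * a) • (B₁⁻¹ * (A₁ + A₂) * B₂⁻¹) := by
          rw [← mul_assoc, Matrix.nonsing_inv_mul _ hB₁d, one_mul,
            Matrix.mul_nonsing_inv _ hB₂d]
  have hθa : θ * (2 * a) = τ := by
    rw [hθdef, hadef]
    field_simp
  have hT : 1 - τ • (B₁⁻¹ * (A₁ + A₂) * B₂⁻¹) = (1 - θ) • 1 + θ • (K₁ * K₂) := by
    rw [hK, smul_sub, smul_smul, hθa, sub_smul, one_smul]
    abel
  rw [hT, map_add, _root_.map_smul, _root_.map_smul, _root_.map_mul, _root_.map_one]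
  have h2 : ‖Matrix.toEuclideanCLM (𝕜 := ℝ) K₂‖ ≤ 1 := by
    have hcomm : (1 - a • A₂) * B₂ = B₂ * (1 - a • A₂) := by
      rw [hB₂def]
      simp only [sub_mul, mul_sub, mul_add, add_mul, Matrix.smul_mul,
        Matrix.mul_smul, Matrix.one_mul, Matrix.mul_one, one_mul, mul_one]
      abel
    have hsw : K₂ = B₂⁻¹ * (1 - a • A₂) := by
      rw [hK₂def]
      calc (1 - a • A₂) * B₂⁻¹
          = B₂⁻¹ * B₂ * ((1 - a • A₂) * B₂⁻¹) := by
            rw [Matrix.nonsing_inv_mul _ hB₂d, one_mul]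
      _ = B₂⁻¹ * ((1 - a • A₂) * B₂) * B₂⁻¹ := by
            rw [hcomm, mul_assoc, mul_assoc, mul_assoc]
      _ = B₂⁻¹ * (1 - a • A₂) * (B₂ * B₂⁻¹) := by
            rw [mul_assoc, mul_assoc, mul_assoc]
      _ = B₂⁻¹ * (1 - a • A₂) := by
            rw [Matrix.mul_nonsing_inv _ hB₂d, mul_one]
    rw [hsw]
    exact aux_cayley_norm_le hA₂ ha.le
  have h1 : ‖Matrix.toEuclideanCLM (𝕜 := ℝ) K₁‖ ≤ 1 := aux_cayley_norm_le hA₁ ha.le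
  have e1 : ‖(1 - θ) • (1 : EuclideanSpace ℝ (Fin n) →L[ℝ] EuclideanSpace ℝ (Fin n))‖
      ≤ (1 - θ) := by
    refine le_trans (ContinuousLinearMap.opNorm_smul_le _ _) ?_
    rw [Real.norm_eq_abs, abs_of_nonneg (by linarith)]
    calc (1 - θ) * ‖(1 : EuclideanSpace ℝ (Fin n) →L[ℝ] EuclideanSpace ℝ (Fin n))‖
        ≤ (1 - θ) * 1 := by
          refine mul_le_mul_of_nonneg_left ?_ (by linarith)
          rw [ContinuousLinearMap.one_def]
          exact ContinuousLinearMap.norm_id_le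
    _ = 1 - θ := mul_one _
  have e2 : ‖θ • (Matrix.toEuclideanCLM (𝕜 := ℝ) K₁ * Matrix.toEuclideanCLM (𝕜 := ℝ) K₂)‖
      ≤ θ := by
    refine le_trans (ContinuousLinearMap.opNorm_smul_le _ _) ?_
    rw [Real.norm_eq_abs, abs_of_nonneg hθpos.le]
    calc θ * ‖Matrix.toEuclideanCLM (𝕜 := ℝ) K₁ * Matrix.toEuclideanCLM (𝕜 := ℝ) K₂‖
        ≤ θ * (‖Matrix.toEuclideanCLM (𝕜 := ℝ) K₁‖ * ‖Matrix.toEuclideanCLM (𝕜 := ℝ) K₂‖) :=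
          mul_le_mul_of_nonneg_left (norm_mul_le _ _) hθpos.le
    _ ≤ θ * (1 * 1) := by
          refine mul_le_mul_of_nonneg_left ?_ hθpos.le
          exact mul_le_mul h1 h2 (norm_nonneg _) zero_le_one
    _ = θ := by ring
  calc ‖(1 - θ) • (1 : EuclideanSpace ℝ (Fin n) →L[ℝ] EuclideanSpace ℝ (Fin n)) +
        θ • (Matrix.toEuclideanCLM (𝕜 := ℝ) K₁ * Matrix.toEuclideanCLM (𝕜 := ℝ) K₂)‖
      ≤ (1 - θ) + θ := le_trans (norm_add_le _ _) (add_le_add e1 e2)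
  _ = 1 := by ring
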